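/- Let G be a prodiscrete topological group, and let G^∧ = Aut(F_G) be its prodiscrete completion, equipped with the group topology whose open subgroups are exactly the subgroups U_{X,x}. Then G^∧ is complete: the canonical homomorphism ι_{G^∧} : G^∧ → (G^∧)^∧ = Aut(F_{G^∧}) is an isomorphism of groups. -/

import Mathlib

open CategoryTheory

universe u v

namespace ProdiscreteCompletion

variable (G : Type u) [Group G] [TopologicalSpace G]

/-- The category `G-Set` of continuous discrete `G`-sets: `G`-sets in which the stabilizer of
every point is an open subgroup of `G` (equivalently, the action map is continuous for the
discrete topology on the set). -/
abbrev ContGSet :=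
  ObjectProperty.FullSubcategory (fun X : Action (Type u) G =>
    ∀ x : X.V, IsOpen {g : G | X.ρ g x = x})

/-- The forgetful functor `F_G : G-Set ⥤ Set` on continuous discrete `G`-sets. -/
abbrev forgetContGSet : ContGSet G ⥤ Type u :=
  ObjectProperty.ι _ ⋙ Action.forget _ _

variable {G}

/-- For `g : G`, the natural automorphism of the forgetful functor whose component at each
continuous discrete `G`-set `X` is the action of `g` on `X`. -/
def iotaIso (g : G) : forgetContGSet G ≅ forgetContGSet G :=
  NatIso.ofComponents
    (fun X => Equiv.toIso
      { toFun := X.obj.ρ g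
        invFun := X.obj.ρ g⁻¹
        left_inv := fun x => by
          have h : X.obj.ρ (g⁻¹ * g) x = X.obj.ρ g⁻¹ (X.obj.ρ g x) :=
            by rw [X.obj.ρ.map_mul g⁻¹ g]; rfl
          rw [inv_mul_cancel, map_one] at h
          exact h.symm
        right_inv := fun x => by
          have h : X.obj.ρ (g * g⁻¹) x = X.obj.ρ g (X.obj.ρ g⁻¹ x) :=
            by rw [X.obj.ρ.map_mul g g⁻¹]; rfl
          rw [mul_inv_cancel, map_one] at h
          exact h.symm })
    (fun {X Y} f => by ext x; exact (ConcreteCategory.congr_hom (f.hom.comm g) x).symm)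

variable (G)

/-- The canonical group homomorphism `ι_G : G → G^∧ = Aut (F_G)` sending `g ∈ G` to the
natural automorphism of the forgetful functor acting by `g` on each continuous discrete
`G`-set. -/
def iota : G →* Aut (forgetContGSet G) where
  toFun := iotaIso
  map_one' := by
    ext X x
    show (iotaIso 1).hom.app X x = _
    simp [iotaIso]
    rfl
  map_mul' g₁ g₂ := by
    ext X x
    have h : X.obj.ρ (g₁ * g₂) x = X.obj.ρ g₁ (X.obj.ρ g₂ x) :=
      by rw [X.obj.ρ.map_mul g₁ g₂]; rfl
    exact h

variable {G}

/-- The stabilizer subgroup `U_{X,x} ⊆ Aut (F_G)` of a point `x` of a continuous discrete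
`G`-set `X`. -/
def USub (X : ContGSet G) (x : X.obj.V) : Subgroup (Aut (forgetContGSet G)) where
  carrier := {γ | γ.hom.app X x = x}
  one_mem' := rfl
  mul_mem' := by
    intro γ δ hγ hδ
    show (γ * δ).hom.app X x = x
    rw [Aut.Aut_mul_def]
    show γ.hom.app X (δ.hom.app X x) = x
    rw [show δ.hom.app X x = x from hδ]
    exact hγ
  inv_mem' := by
    intro γ hγ
    show γ⁻¹.hom.app X x = x
    conv_lhs => rw [← show γ.hom.app X x = x from hγ]
    rw [Aut.Aut_inv_def]
    exact ConcreteCategory.congr_hom (congrArg (fun τ : forgetContGSet G ⟶ forgetContGSet G => τ.app X)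
      γ.hom_inv_id) x



/-- Multiplicativity of a (monoid-valued) action, applied pointwise. -/
theorem rho_mul_apply {H : Type v} [Monoid H]
    (W : Action (Type v) H) (a b : H) (w : W.V) :
    W.ρ (a * b) w = W.ρ a (W.ρ b w) :=
  by rw [W.ρ.map_mul a b]; rfl

/-- In a (monoid-valued) action of a group, the action of `δ⁻¹` undoes that of `δ`. -/
theorem rho_inv_cancel {H : Type v} [Group H]
    (W : Action (Type v) H) (δ : H) (w : W.V) :
    W.ρ δ (W.ρ δ⁻¹ w) = w := by
  have h := rho_mul_apply W δ δ⁻¹ w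
  rw [mul_inv_cancel] at h
  simpa using h.symm

section Aux

variable [TopologicalSpace (Aut (forgetContGSet G))]

/-- The action of `G^∧ = Aut (F_G)` on (the underlying set of) a continuous discrete
`G`-set `X`, with the underlying set lifted one universe up. -/
def hatAction (X : ContGSet G) :
    Action (Type (u + 1)) (Aut (forgetContGSet G)) where
  V := ULift.{u + 1} X.obj.V
  ρ :=
    { toFun := fun γ => TypeCat.ofHom fun z => ULift.up (γ.hom.app X z.down)
      map_one' := rfl
      map_mul' := fun γ δ => rfl }

variable (hopen : ∀ (X : ContGSet G) (x : X.obj.V),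
    IsOpen ((USub X x : Subgroup (Aut (forgetContGSet G))) :
      Set (Aut (forgetContGSet G))))

/-- A continuous discrete `G`-set, regarded as a continuous discrete `G^∧`-set. -/
def hat (X : ContGSet G) : ContGSet (Aut (forgetContGSet G)) := by
  refine ⟨hatAction X, fun z => ?_⟩
  have hs : {γ : Aut (forgetContGSet G) | (hatAction X).ρ γ z = z}
      = ((USub X (ULift.down z) : Subgroup (Aut (forgetContGSet G))) :
          Set (Aut (forgetContGSet G))) := by
    ext γ
    exact ⟨fun h => congrArg ULift.down h, fun h => congrArg ULift.up h⟩
  rw [hs]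
  exact hopen X (ULift.down z)

/-- A `G`-equivariant map is `G^∧`-equivariant. -/
def hatMap {X Y : ContGSet G} (f : X ⟶ Y) : hat hopen X ⟶ hat hopen Y where
  hom :=
    { hom := TypeCat.ofHom fun z => ULift.up (f.hom.hom (ULift.down z))
      comm := fun γ => by
        ext z
        have h := types_congr_hom (γ.hom.naturality f) (ULift.down (α := X.obj.V) z)
        exact congrArg ULift.up h.symm }

/-- Restriction of an endomorphism of `F_{G^∧}` to an endomorphism of `F_G`. -/
def pullNat
    (θ : forgetContGSet (Aut (forgetContGSet G)) ⟶
      forgetContGSet (Aut (forgetContGSet G))) :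
    forgetContGSet G ⟶ forgetContGSet G where
  app X := TypeCat.ofHom fun x => ULift.down (θ.app (hat hopen X) (ULift.up x))
  naturality _ _ f := by
    ext x
    exact congrArg ULift.down
      (types_congr_hom (θ.naturality (hatMap hopen f)) (ULift.up x))

/-- Restriction of an automorphism of `F_{G^∧}` to an automorphism of `F_G`. -/
def pull
    (Θ : Aut (forgetContGSet (Aut (forgetContGSet G)))) :
    Aut (forgetContGSet G) where
  hom := pullNat hopen Θ.hom
  inv := pullNat hopen Θ.inv
  hom_inv_id := by
    ext X x
    exact congrArg ULift.down (types_congr_hom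
      (congrArg (fun τ : forgetContGSet (Aut (forgetContGSet G)) ⟶
          forgetContGSet (Aut (forgetContGSet G)) => τ.app (hat hopen X))
        Θ.hom_inv_id) (ULift.up x))
  inv_hom_id := by
    ext X x
    exact congrArg ULift.down (types_congr_hom
      (congrArg (fun τ : forgetContGSet (Aut (forgetContGSet G)) ⟶
          forgetContGSet (Aut (forgetContGSet G)) => τ.app (hat hopen X))
        Θ.inv_hom_id) (ULift.up x))

/-- The underlying set of the `G^∧`-orbit of a point `x` in a continuous discrete
`G`-set `X`. -/
abbrev orbitSet (X : ContGSet G) (x : X.obj.V) : Type u :=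
  {z : X.obj.V // ∃ δ : Aut (forgetContGSet G), δ.hom.app X x = z}

theorem orbit_wit (X : ContGSet G) (x : X.obj.V) (g : G) (z : orbitSet X x) :
    ∃ δ : Aut (forgetContGSet G), δ.hom.app X x = X.obj.ρ g z.1 := by
  obtain ⟨δ, hδ⟩ := z.2
  refine ⟨iota G g * δ, ?_⟩
  show X.obj.ρ g (δ.hom.app X x) = X.obj.ρ g z.1
  rw [hδ]

/-- The `G^∧`-orbit of a point of a continuous discrete `G`-set, as a continuous discrete
`G`-set. -/
def orbit (X : ContGSet G) (x : X.obj.V) : ContGSet G where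
  obj :=
    { V := orbitSet X x
      ρ :=
        { toFun := fun g => TypeCat.ofHom fun z => ⟨X.obj.ρ g z.1, orbit_wit X x g z⟩
          map_one' := by
            apply ConcreteCategory.hom_ext
            intro z
            refine Subtype.ext ?_
            show X.obj.ρ 1 z.1 = z.1
            simp
          map_mul' := fun g h => by
            apply ConcreteCategory.hom_ext
            intro z
            exact Subtype.ext (rho_mul_apply X.obj g h z.1) } }
  property := fun z => by
    show IsOpen {g : G |
      (⟨X.obj.ρ g z.1, orbit_wit X x g z⟩ : orbitSet X x) = z}
    have hs : {g : G | (⟨X.obj.ρ g z.1, orbit_wit X x g z⟩ : orbitSet X x) = z}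
        = {g : G | X.obj.ρ g z.1 = z.1} := Set.ext fun g => Subtype.ext_iff
    rw [hs]
    exact X.property z.1

/-- The inclusion of an orbit into the ambient continuous discrete `G`-set. -/
def orbitIncl (X : ContGSet G) (x : X.obj.V) : orbit X x ⟶ X where
  hom :=
    { hom := TypeCat.ofHom (fun z : orbitSet X x => z.1)
      comm := fun _ => rfl }

theorem orbit_app_val (X : ContGSet G) (x : X.obj.V)
    (δ : Aut (forgetContGSet G)) (z : (orbit X x).obj.V) :
    Subtype.val (δ.hom.app (orbit X x) z) = δ.hom.app X (Subtype.val z) :=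
  (types_congr_hom (δ.hom.naturality (orbitIncl X x)) z).symm

/-- The base point of an orbit. -/
def basept (X : ContGSet G) (x : X.obj.V) : orbitSet X x :=
  ⟨x, 1, rfl⟩

section ToY

variable (Y : ContGSet (Aut (forgetContGSet G))) (y : Y.obj.V)
  (X : ContGSet G) (x : X.obj.V)
  (hmem : ∀ δ : Aut (forgetContGSet G), δ.hom.app X x = x → Y.obj.ρ δ y = y)

include hmem

/-- Two automorphisms of `F_G` agreeing at `x` act the same way on `y`. -/
theorem act_eq_of_app_eq (δ₁ δ₂ : Aut (forgetContGSet G))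
    (hδ : δ₁.hom.app X x = δ₂.hom.app X x) : Y.obj.ρ δ₁ y = Y.obj.ρ δ₂ y := by
  have h1 : (δ₂⁻¹ * δ₁).hom.app X x = x := by
    show δ₂⁻¹.hom.app X (δ₁.hom.app X x) = x
    rw [hδ, Aut.Aut_inv_def]
    exact ConcreteCategory.congr_hom
      (congrArg (fun τ : forgetContGSet G ⟶ forgetContGSet G => τ.app X)
        δ₂.hom_inv_id) x
  have h2 : Y.obj.ρ (δ₂⁻¹ * δ₁) y = y := hmem _ h1
  have h3 : Y.obj.ρ (δ₂⁻¹ * δ₁) y = Y.obj.ρ δ₂⁻¹ (Y.obj.ρ δ₁ y) :=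
    rho_mul_apply Y.obj δ₂⁻¹ δ₁ y
  calc Y.obj.ρ δ₁ y
      = Y.obj.ρ δ₂ (Y.obj.ρ δ₂⁻¹ (Y.obj.ρ δ₁ y)) :=
        (rho_inv_cancel Y.obj δ₂ _).symm
    _ = Y.obj.ρ δ₂ y := by rw [← h3, h2]

/-- The `G^∧`-equivariant map from the orbit of `x` (as a `G^∧`-set) to `Y`, sending the
base point to `y`. -/
noncomputable def toY : hat hopen (orbit X x) ⟶ Y where
  hom :=
  { hom := TypeCat.ofHom fun (z : ULift (orbitSet X x)) =>
      Y.obj.ρ (Classical.choose z.down.2) y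
    comm := by
      intro ε0
      ext (z : ULift (orbitSet X x))
      set ε : Aut (forgetContGSet G) := ε0 with hε
      show Y.obj.ρ (Classical.choose (Subtype.property (ε.hom.app (orbit X x) z.down))) y
        = Y.obj.ρ ε (Y.obj.ρ (Classical.choose z.down.2) y)
      have key : (Classical.choose (Subtype.property (ε.hom.app (orbit X x) z.down))).hom.app X x
          = (ε * Classical.choose z.down.2).hom.app X x := by
        rw [Classical.choose_spec (Subtype.property (ε.hom.app (orbit X x) z.down)),
          orbit_app_val X x ε z.down]
        show ε.hom.app X z.down.1
          = ε.hom.app X ((Classical.choose z.down.2).hom.app X x)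
        rw [Classical.choose_spec z.down.2]
      rw [act_eq_of_app_eq Y y X x hmem _ _ key]
      exact rho_mul_apply Y.obj ε (Classical.choose z.down.2) y }

end ToY

end Aux


/-- Proposition `P:complete` of the paper.  Let `G` be a prodiscrete
topological group and equip its prodiscrete completion `G^∧ = Aut (F_G)` with the group
topology whose open subgroups are exactly the stabilizer subgroups `U_{X,x}`.  Then `G^∧` is
complete: the canonical homomorphism `ι_{G^∧} : G^∧ → (G^∧)^∧` is an isomorphism of groups. -/
theorem completion_is_complete
    (G : Type u) [Group G] [TopologicalSpace G] [IsTopologicalGroup G]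
    (hG : (nhds (1 : G)).HasBasis (fun H : Subgroup G => IsOpen (H : Set G))
      (fun H : Subgroup G => (H : Set G)))
    (t : TopologicalSpace (Aut (forgetContGSet G)))
    (ht : @IsTopologicalGroup (Aut (forgetContGSet G)) t _)
    (htop : ∀ K : Subgroup (Aut (forgetContGSet G)),
      @IsOpen _ t (K : Set (Aut (forgetContGSet G))) ↔
        ∃ (X : ContGSet G) (x : X.obj.V), K = USub X x) :
    Function.Bijective (@iota (Aut (forgetContGSet G)) _ t) := by
  letI : TopologicalSpace (Aut (forgetContGSet G)) := t
  have hopen : ∀ (X : ContGSet G) (x : X.obj.V),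
      IsOpen ((USub X x : Subgroup (Aut (forgetContGSet G))) :
        Set (Aut (forgetContGSet G))) :=
    fun X x => (htop (USub X x)).mpr ⟨X, x, rfl⟩
  constructor
  · -- injectivity
    intro γ δ h
    apply Iso.ext
    ext X x
    have h' := types_congr_hom
      (congrArg
        (fun Θ : Aut (forgetContGSet (Aut (forgetContGSet G))) =>
          Θ.hom.app (hat hopen X)) h) (ULift.up x)
    exact congrArg ULift.down h'
  · -- surjectivity
    intro Θ
    refine ⟨pull hopen Θ, ?_⟩
    apply Iso.ext
    ext Y y
    show Y.obj.ρ (pull hopen Θ) y = Θ.hom.app Y y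
    -- the stabilizer of `y` is an open subgroup, hence of the form `U_{X,x}`
    have hstab : IsOpen
        ((({ carrier := {δ | Y.obj.ρ δ y = y}
             one_mem' := by
               show Y.obj.ρ 1 y = y
               rw [map_one]
               rfl
             mul_mem' := by
               intro a b ha hb
               have h : Y.obj.ρ (a * b) y = Y.obj.ρ a (Y.obj.ρ b y) :=
                 rho_mul_apply Y.obj a b y
               show Y.obj.ρ (a * b) y = y
               rw [h, show Y.obj.ρ b y = y from hb]
               exact ha
             inv_mem' := by
               intro a ha
               show Y.obj.ρ a⁻¹ y = y
               conv_lhs => rw [← show Y.obj.ρ a y = y from ha]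
               have h : Y.obj.ρ (a⁻¹ * a) y = Y.obj.ρ a⁻¹ (Y.obj.ρ a y) :=
                 rho_mul_apply Y.obj a⁻¹ a y
               rw [inv_mul_cancel, map_one] at h
               exact h.symm } : Subgroup (Aut (forgetContGSet G))) :
          Set (Aut (forgetContGSet G)))) := Y.property y
    obtain ⟨X, x, hK⟩ := (htop _).mp hstab
    have hmem : ∀ δ : Aut (forgetContGSet G),
        δ.hom.app X x = x → Y.obj.ρ δ y = y := by
      intro δ hδ
      have hKm := hK.symm.le (show δ ∈ USub X x from hδ)
      exact hKm
    -- evaluate naturality of `Θ` at the base point of the orbit of `x`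
    have hnat := types_congr_hom (Θ.hom.naturality (toY hopen Y y X x hmem))
      (ULift.up (basept X x))
    have hfx : (toY hopen Y y X x hmem).hom.hom (ULift.up (basept X x)) = y := by
      show Y.obj.ρ (Classical.choose (basept X x).2) y = y
      exact hmem _ (Classical.choose_spec (basept X x).2)
    have hρ : Θ.hom.app (hat hopen (orbit X x)) (ULift.up (basept X x))
        = ULift.up ((pull hopen Θ).hom.app (orbit X x) (basept X x)) := rfl
    have hlast : (toY hopen Y y X x hmem).hom.hom
        (ULift.up ((pull hopen Θ).hom.app (orbit X x) (basept X x)))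
        = Y.obj.ρ (pull hopen Θ) y := by
      show Y.obj.ρ
        (Classical.choose (Subtype.property ((pull hopen Θ).hom.app (orbit X x) (basept X x)))) y
        = Y.obj.ρ (pull hopen Θ) y
      refine act_eq_of_app_eq Y y X x hmem _ _ ?_
      rw [Classical.choose_spec (Subtype.property ((pull hopen Θ).hom.app (orbit X x) (basept X x))),
        orbit_app_val X x (pull hopen Θ) (basept X x)]
      rfl
    have hnat' : Θ.hom.app Y ((toY hopen Y y X x hmem).hom.hom (ULift.up (basept X x)))
        = (toY hopen Y y X x hmem).hom.hom
          (Θ.hom.app (hat hopen (orbit X x)) (ULift.up (basept X x))) := hnat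
    rw [hfx] at hnat'
    exact (hnat'.trans hlast).symm


end ProdiscreteCompletion
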